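/- arXiv:2502.15320 — 2 statements merged into one kernel-verified Lean document; each statement's English description precedes it below -/
import Mathlib

section
/- Let $\varepsilon, \beta, \phi$ be reals with $0 < \varepsilon \leq \frac{1}{6}$, $0 \leq \beta \leq \frac{\varepsilon}{200}$, $\phi \geq 0$, and $\phi + \varepsilon \leq 1$. Define the real sequence $(h'_i)$ by $h'_0 := 1 - (\phi + \varepsilon)$ and $h'_{i+1} := (h'_i - \beta)^2$. Then there exists an integer $t$ with $0 \leq t \leq \frac{3}{2}\log_2\left(\frac{1}{\varepsilon}\right)$ such that $h'_t \leq \frac{1}{2} - \frac{21\varepsilon}{16}$; in particular, the least such index $t$ satisfies $t \leq \frac{3}{2}\log_2\left(\frac{1}{\varepsilon}\right)$. -/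
set_option maxHeartbeats 1000000

/-- Polynomial endgame inequality. -/
lemma stmt_9_poly (s : ℝ) (hs : 0 < s) (h6 : 6 * s ^ 2 ≤ 1) :
    2048 * s ^ 2 ≤ 2.7182818283 * ((8 - 21 * s ^ 2) * (s ^ 4 + 72 * s ^ 2 + 16)) := by
  nlinarith [mul_nonneg (sq_nonneg s) (by linarith : (0:ℝ) ≤ 1 - 6 * s ^ 2),
    sq_nonneg (s ^ 2), mul_nonneg (mul_nonneg (sq_nonneg s) (sq_nonneg s)) (by linarith : (0:ℝ) ≤ 1 - 6 * s ^ 2)]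

/-- Termination bound for the recursion `h' 0 = 1 - (φ + ε)`, `h' (i+1) = (h' i - β)²`:
there is an index `t ≤ (3/2) log₂(1/ε)` with `h' t ≤ 1/2 - 21ε/16`. -/
theorem stmt_9 (ε β φ : ℝ) (hε0 : 0 < ε) (hε : ε ≤ 1 / 6) (hβ0 : 0 ≤ β) (hβ : β ≤ ε / 200)
    (hφ : 0 ≤ φ) (hφε : φ + ε ≤ 1)
    (h' : ℕ → ℝ) (h0 : h' 0 = 1 - (φ + ε)) (hrec : ∀ i, h' (i + 1) = (h' i - β) ^ 2) :
    ∃ t : ℕ, (t : ℝ) ≤ 3 / 2 * Real.logb 2 (1 / ε) ∧ h' t ≤ 1 / 2 - 21 * ε / 16 := by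
  obtain ⟨T, hT⟩ : ∃ T : ℝ, T = 1 / 2 - 21 * ε / 16 := ⟨_, rfl⟩
  rw [← hT]
  have hT0 : 0 < T := by rw [hT]; nlinarith
  have hThalf : T ≤ 1 / 2 := by rw [hT]; nlinarith
  have hβT : β ≤ T := by rw [hT]; nlinarith
  have hε1 : ε < 1 := by linarith
  -- the invariant
  have inv : ∀ j, 0 ≤ h' j ∧ h' j ≤ max T ((1 - ε) ^ (2 ^ j)) := by
    intro j
    induction j with
    | zero =>
      refine ⟨by rw [h0]; linarith, ?_⟩
      rw [h0]
      refine le_max_of_le_right ?_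
      norm_num
      linarith
    | succ j ih =>
      obtain ⟨hnn, hub⟩ := ih
      refine ⟨by rw [hrec]; positivity, ?_⟩
      rw [hrec]
      by_cases hc : h' j ≤ T
      · refine le_max_of_le_left ?_
        nlinarith [mul_nonneg (sub_nonneg.mpr hc) hnn, mul_nonneg (sub_nonneg.mpr hβT) hβ0,
          mul_nonneg hnn hβ0,
          mul_nonneg hT0.le (by linarith : (0:ℝ) ≤ 1 - h' j - β)]
      · push_neg at hc
        have hub' : h' j ≤ (1 - ε) ^ (2 ^ j) := by
          rcases max_cases T ((1 - ε) ^ (2 ^ j)) with ⟨h1, h2⟩ | ⟨h1, h2⟩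
          · linarith [hub, h1 ▸ hub]
          · linarith [hub, h1 ▸ hub]
        refine le_max_of_le_right ?_
        have hβh : β ≤ h' j := le_trans hβT hc.le
        have h1 : (h' j - β) ^ 2 ≤ (h' j) ^ 2 := by nlinarith
        have h2 : (h' j) ^ 2 ≤ ((1 - ε) ^ (2 ^ j)) ^ 2 := by
          apply pow_le_pow_left₀ hnn hub'
        calc (h' j - β) ^ 2 ≤ ((1 - ε) ^ (2 ^ j)) ^ 2 := le_trans h1 h2
          _ = (1 - ε) ^ (2 ^ (j + 1)) := by rw [← pow_mul, ← pow_succ]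
  -- choose t
  have h1ε : (1 : ℝ) ≤ 1 / ε := by rw [le_div_iff₀ hε0]; linarith
  have hL0 : 0 ≤ Real.logb 2 (1 / ε) := Real.logb_nonneg (by norm_num) h1ε
  obtain ⟨L, hLdef⟩ : ∃ L : ℝ, L = Real.logb 2 (1 / ε) := ⟨_, rfl⟩
  rw [← hLdef] at hL0 ⊢
  refine ⟨⌊3 / 2 * L⌋₊, Nat.floor_le (by positivity), ?_⟩
  obtain ⟨t, htdef⟩ : ∃ t : ℕ, t = ⌊3 / 2 * L⌋₊ := ⟨_, rfl⟩
  rw [← htdef]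
  -- suffices to bound (1-ε)^(2^t)
  suffices key : (1 - ε) ^ (2 ^ t) ≤ T by
    exact le_trans (inv t).2 (max_le le_rfl key)
  -- set up sqrt
  obtain ⟨s, hs0, hs2⟩ : ∃ s : ℝ, 0 < s ∧ s ^ 2 = ε :=
    ⟨Real.sqrt ε, Real.sqrt_pos.mpr hε0, Real.sq_sqrt hε0.le⟩
  have h6s : 6 * s ^ 2 ≤ 1 := by rw [hs2]; linarith
  obtain ⟨y, hydef⟩ : ∃ y : ℝ, y = ε + ε ^ 2 / 4 := ⟨_, rfl⟩
  have hy0 : 0 < y := by rw [hydef]; positivity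
  have hy2 : y < 2 := by rw [hydef]; nlinarith
  -- Step 1 : 1 - ε ≤ exp (-y)
  have step1 : 1 - ε ≤ Real.exp (-y) := by
    have e1 : 1 - y / 2 ≤ Real.exp (-(y / 2)) := by
      have := Real.add_one_le_exp (-(y / 2)); linarith
    have e2 : (1 - y / 2) ^ 2 ≤ Real.exp (-(y / 2)) ^ 2 :=
      pow_le_pow_left₀ (by linarith) e1 2
    have e3 : Real.exp (-(y / 2)) ^ 2 = Real.exp (-y) := by
      rw [← Real.exp_nat_mul]; congr 1; push_cast; ring
    have e4 : (1 - y / 2) ^ 2 - (1 - ε) = ε ^ 3 / 8 + ε ^ 4 / 64 := by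
      rw [hydef]; ring
    nlinarith [pow_pos hε0 3, pow_pos hε0 4]
  -- Step 2 : lower bound on 2^t
  obtain ⟨g, hgdef⟩ : ∃ g : ℝ, g = (4 + s ^ 2) / (8 * s) := ⟨_, rfl⟩
  have hA : (1 / ε : ℝ) ^ (3 / 2 : ℝ) = 1 / s ^ 3 := by
    have hεs : (1 / ε : ℝ) = (1 / s) ^ (2 : ℕ) := by
      rw [← hs2]; field_simp
    rw [hεs, ← Real.rpow_natCast (1 / s) 2, ← Real.rpow_mul (by positivity)]
    norm_num
  have hNge : (1 / ε : ℝ) ^ (3 / 2 : ℝ) / 2 ≤ ((2 : ℝ) ^ t : ℝ) := by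
    have ht1 : 3 / 2 * L - 1 ≤ (t : ℝ) := by
      have h := Nat.lt_floor_add_one (3 / 2 * L)
      rw [← htdef] at h
      push_cast at h
      linarith
    have h2t : (2 : ℝ) ^ ((3 : ℝ) / 2 * L - 1) ≤ (2 : ℝ) ^ ((t : ℝ) : ℝ) :=
      Real.rpow_le_rpow_of_exponent_le (by norm_num) ht1
    have h2tc : (2 : ℝ) ^ ((t : ℝ) : ℝ) = (2 : ℝ) ^ t := Real.rpow_natCast 2 t
    have hcalc : (2 : ℝ) ^ ((3 : ℝ) / 2 * L - 1) = (1 / ε) ^ (3 / 2 : ℝ) / 2 := by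
      rw [Real.rpow_sub (by norm_num), Real.rpow_one, mul_comm (3 / 2 : ℝ) L, hLdef,
        Real.rpow_mul (by norm_num), Real.rpow_logb (by norm_num) (by norm_num)
        (by positivity)]
    rw [← h2tc, ← hcalc]; exact h2t
  have hn2 : ((2 ^ t : ℕ) : ℝ) = (2 : ℝ) ^ t := by push_cast; ring
  -- Step 3 : g ≤ y * 2^t
  have hyA : y * ((1 / ε) ^ (3 / 2 : ℝ) / 2) = g := by
    rw [hA, hydef, hgdef, ← hs2]; field_simp; ring
  have step3 : g ≤ y * ((2 ^ t : ℕ) : ℝ) := by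
    rw [← hyA, hn2]
    exact mul_le_mul_of_nonneg_left hNge hy0.le
  -- Step 4 : chain of inequalities
  have chain : (1 - ε) ^ (2 ^ t) ≤ Real.exp (-g) := by
    calc (1 - ε) ^ (2 ^ t) ≤ Real.exp (-y) ^ (2 ^ t) :=
          pow_le_pow_left₀ (by linarith) step1 _
      _ = Real.exp (((2 ^ t : ℕ) : ℝ) * (-y)) := (Real.exp_nat_mul _ _).symm
      _ ≤ Real.exp (-g) := by
          apply Real.exp_le_exp.mpr
          nlinarith [step3]
  refine le_trans chain ?_
  -- Step 5 : exp (-g) ≤ T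
  have hg1 : 1 ≤ g := by
    rw [hgdef, le_div_iff₀ (by positivity)]
    nlinarith [sq_nonneg (7 * s - 4)]
  have hd : 0 ≤ g - 1 := by linarith
  have hquad : 1 + (g - 1) + (g - 1) ^ 2 / 2 ≤ Real.exp (g - 1) :=
    Real.quadratic_le_exp_of_nonneg hd
  have hexpg : Real.exp 1 * (1 + (g - 1) + (g - 1) ^ 2 / 2) ≤ Real.exp g := by
    have h := Real.exp_add 1 (g - 1)
    have h2 : Real.exp (1 + (g - 1)) = Real.exp g := by ring_nf
    rw [h2] at h
    rw [h]
    exact mul_le_mul_of_nonneg_left hquad (Real.exp_pos 1).le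
  have hE : (2.7182818283 : ℝ) ≤ Real.exp 1 := Real.exp_one_gt_d9.le
  have hQ : 1 + (g - 1) + (g - 1) ^ 2 / 2 = (s ^ 4 + 72 * s ^ 2 + 16) / (128 * s ^ 2) := by
    rw [hgdef]; field_simp; ring
  have hTs : T = (8 - 21 * s ^ 2) / 16 := by rw [hT, ← hs2]; ring
  have hmain : 1 ≤ T * Real.exp g := by
    have hpoly := stmt_9_poly s hs0 h6s
    have h1 : 1 ≤ T * (2.7182818283 * ((s ^ 4 + 72 * s ^ 2 + 16) / (128 * s ^ 2))) := by
      rw [hTs, show (8 - 21 * s ^ 2) / 16 * (2.7182818283 * ((s ^ 4 + 72 * s ^ 2 + 16) / (128 * s ^ 2)))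
          = 2.7182818283 * ((8 - 21 * s ^ 2) * (s ^ 4 + 72 * s ^ 2 + 16)) / (2048 * s ^ 2) by
        field_simp; ring]
      rw [le_div_iff₀ (by positivity)]
      linarith
    have hQpos : 0 ≤ (s ^ 4 + 72 * s ^ 2 + 16) / (128 * s ^ 2) := by positivity
    calc (1 : ℝ) ≤ T * (2.7182818283 * ((s ^ 4 + 72 * s ^ 2 + 16) / (128 * s ^ 2))) := h1
      _ ≤ T * (Real.exp 1 * ((s ^ 4 + 72 * s ^ 2 + 16) / (128 * s ^ 2))) := by
          apply mul_le_mul_of_nonneg_left _ hT0.le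
          exact mul_le_mul_of_nonneg_right hE hQpos
      _ = T * (Real.exp 1 * (1 + (g - 1) + (g - 1) ^ 2 / 2)) := by rw [hQ]
      _ ≤ T * Real.exp g := mul_le_mul_of_nonneg_left hexpg hT0.le
  rw [Real.exp_neg, ← one_div]
  exact (div_le_iff₀ (Real.exp_pos g)).mpr (by linarith)
end

section
/- Let $\varepsilon, \beta, \phi$ be reals with $0 < \varepsilon \leq \frac{1}{6}$, $0 < \beta \leq \frac{\varepsilon^{2.5}}{16}$, $\phi \geq 0$, and $\phi + \varepsilon \leq 1$. Define the real sequences $h'_0 = h_0 := 1 - (\phi + \varepsilon)$, $h'_{i+1} := (h'_i - \beta)^2$, and $h_{i+1} := (h_i + \beta)^2$. Suppose $t \geq 1$ is the least index with $h'_t \leq T := \frac{1}{2} - \frac{21\varepsilon}{16}$ (assumed to exist). Then $h'_i \leq h_i$ for all $i \geq 0$, and moreover $h_{t-1} \leq h'_{t-1}\left(1 + \frac{3\varepsilon}{4}\right)$ and $h_t \leq h'_t\left(1 + \frac{3\varepsilon}{4}\right)$. -/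
set_option maxHeartbeats 2000000 in
private lemma aux_one_le_pow {a : ℝ} (h : 1 ≤ a) (n : ℕ) : 1 ≤ a ^ n := by
  induction n with
  | zero => norm_num
  | succ k ih => rw [pow_succ]; nlinarith

private lemma aux_bern (ε : ℝ) (hε : 0 ≤ ε) :
    ∀ n : ℕ, 1 + (n : ℝ) * ε + (n : ℝ) * ((n : ℝ) - 1) * ε ^ 2 / 2 ≤ (1 + ε) ^ n := by
  intro n
  induction n with
  | zero => norm_num
  | succ k ih =>
    have hk0 : (0:ℝ) ≤ (k : ℝ) := Nat.cast_nonneg k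
    have hk2 : (0:ℝ) ≤ (k : ℝ) * ((k : ℝ) - 1) := by
      rcases Nat.eq_zero_or_pos k with hk | hk
      · simp [hk]
      · have h1 : (1:ℝ) ≤ (k : ℝ) := by exact_mod_cast hk
        nlinarith
    have hmul := mul_le_mul_of_nonneg_right ih (by linarith : (0:ℝ) ≤ 1 + ε)
    have hc : ((k+1:ℕ):ℝ) = (k:ℝ) + 1 := by push_cast; ring
    rw [hc, pow_succ (1+ε) k]
    nlinarith [hmul, hk2, hε, mul_nonneg (mul_nonneg hk2 hε) (mul_nonneg hε hε)]

private lemma aux_pow (a : ℝ) (M : ℕ) (h0 : 0 ≤ a) (h1 : a ≤ 1) :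
    (1 + a) ^ M * (1 - (M : ℝ) * a) ≤ 1 := by
  have hb : 1 - (M : ℝ) * a ≤ (1 - a) ^ M := by
    have hh := one_add_mul_le_pow (by linarith : (-2:ℝ) ≤ -a) M
    have e : (1:ℝ) + -a = 1 - a := by ring
    rw [e] at hh
    linarith
  have h2 : (1 + a) ^ M * (1 - (M : ℝ) * a) ≤ (1 + a) ^ M * (1 - a) ^ M :=
    mul_le_mul_of_nonneg_left hb (pow_nonneg (by linarith) M)
  have h3 : (1 + a) ^ M * (1 - a) ^ M = ((1 + a) * (1 - a)) ^ M := (mul_pow _ _ _).symm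
  have h4 : ((1 + a) * (1 - a)) ^ M ≤ 1 := by
    apply pow_le_one₀ (by nlinarith) (by nlinarith)
  linarith [h3 ▸ h2]

set_option maxHeartbeats 2000000

/-- Closeness of the lower- and upper-tracking recursions `h'` and `h` of the
2-tournament quantile-shifting algorithm: `h' i ≤ h i` for all `i`, and at the least
index `t` where `h' t` drops below the threshold `T = 1/2 - 21ε/16`, one has
`h (t-1) ≤ h' (t-1) (1 + 3ε/4)` and `h t ≤ h' t (1 + 3ε/4)`. -/
theorem stmt_10 (ε β φ : ℝ) (hε0 : 0 < ε) (hε : ε ≤ 1 / 6) (hβ0 : 0 < β)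
    (hβ : β ≤ ε ^ (2.5 : ℝ) / 16) (hφ : 0 ≤ φ) (hφε : φ + ε ≤ 1)
    (h' h : ℕ → ℝ) (h'0 : h' 0 = 1 - (φ + ε)) (h0 : h 0 = 1 - (φ + ε))
    (h'rec : ∀ i, h' (i + 1) = (h' i - β) ^ 2) (hrec : ∀ i, h (i + 1) = (h i + β) ^ 2)
    (t : ℕ) (ht1 : 1 ≤ t)
    (htle : h' t ≤ 1 / 2 - 21 * ε / 16)
    (htleast : ∀ s, s < t → ¬ (h' s ≤ 1 / 2 - 21 * ε / 16)) :
    (∀ i, h' i ≤ h i) ∧ h (t - 1) ≤ h' (t - 1) * (1 + 3 * ε / 4) ∧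
      h t ≤ h' t * (1 + 3 * ε / 4) := by
  have h25 : ε ^ (2.5:ℝ) = ε ^ 2 * Real.sqrt ε := by
    rw [show (2.5:ℝ) = ((2:ℕ):ℝ) + (1/2:ℝ) by norm_num, Real.rpow_add hε0,
      Real.rpow_natCast, Real.sqrt_eq_rpow]
  rw [h25] at hβ
  obtain ⟨σ, hσdef⟩ : ∃ x : ℝ, x = Real.sqrt ε := ⟨_, rfl⟩
  rw [← hσdef] at hβ
  have hσ0 : 0 ≤ σ := hσdef ▸ Real.sqrt_nonneg ε
  have hσ2 : σ ^ 2 = ε := by rw [hσdef]; exact Real.sq_sqrt hε0.le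
  have hσle : σ ≤ 0.409 := by nlinarith only [hσ2, hσ0, hε]
  have hβε : β ≤ 0.00427 * ε := by
    have k1 : ε * σ ≤ (1/6) * 0.409 := mul_le_mul hε hσle hσ0 (by norm_num)
    nlinarith only [hβ, k1, hε0.le, hσ0, hε, mul_le_mul_of_nonneg_left k1 hε0.le]
  have hβn : β ≤ 0.00072 := by linarith only [hβε, hε, hε0.le]
  obtain ⟨T, hTdef⟩ : ∃ x : ℝ, x = 1 / 2 - 21 * ε / 16 := ⟨_, rfl⟩
  rw [← hTdef] at htle htleast
  have hT9 : 9/32 ≤ T := by rw [hTdef]; linarith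
  have hT12 : T ≤ 1/2 := by rw [hTdef]; linarith
  have hβT : β < T := by linarith
  obtain ⟨s, hsdef⟩ : ∃ x : ℝ, x = Real.sqrt T := ⟨_, rfl⟩
  have hs0 : 0 ≤ s := hsdef ▸ Real.sqrt_nonneg T
  have hs2 : s ^ 2 = T := by rw [hsdef]; exact Real.sq_sqrt (by linarith)
  have hsge : 0.53 ≤ s := by nlinarith only [hs2, hs0, hT9]
  obtain ⟨q, hqdef⟩ : ∃ x : ℝ, x = Real.sqrt s := ⟨_, rfl⟩
  have hq0 : 0 ≤ q := hqdef ▸ Real.sqrt_nonneg s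
  have hq2 : q ^ 2 = s := by rw [hqdef]; exact Real.sq_sqrt hs0
  have hqge : 0.728 ≤ q := by nlinarith only [hq2, hq0, hsge]
  have hqpos : (0:ℝ) < q := by linarith
  have hspos : (0:ℝ) < s := by linarith
  have hTβpos : (0:ℝ) < T - β := by linarith
  -- positivity and domination h' ≤ h
  have hpos : ∀ i, 0 ≤ h' i ∧ h' i ≤ h i := by
    intro i
    induction i with
    | zero => rw [h'0, h0]; exact ⟨by linarith, le_rfl⟩
    | succ k ih =>
      obtain ⟨h1, h2⟩ := ih
      rw [h'rec, hrec]
      refine ⟨sq_nonneg _, ?_⟩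
      nlinarith only [h1, h2, hβ0.le, sq_nonneg (h k - h' k),
        mul_nonneg (sub_nonneg.mpr h2) h1, mul_nonneg hβ0.le h1,
        mul_nonneg hβ0.le (sub_nonneg.mpr h2)]
  have hh0 : ∀ i, 0 ≤ h i := fun i => le_trans (hpos i).1 (hpos i).2
  have hTlt : ∀ i, i < t → T < h' i := fun i hi => not_le.mp (htleast i hi)
  -- upper bound on h' by (1-ε)^(2^i)
  have hup : ∀ i, i < t → h' i ≤ (1 - ε) ^ (2 ^ i) := by
    intro i
    induction i with
    | zero =>
      intro _
      rw [h'0, show (2:ℕ)^0 = 1 from rfl, pow_one]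
      linarith
    | succ k ih =>
      intro hk
      have hk' : k < t := by omega
      have h1 := hTlt k hk'
      have h2 := ih hk'
      rw [h'rec]
      have h5 : (0:ℝ) ≤ h' k - β := by linarith
      have h6 : h' k - β ≤ (1 - ε) ^ (2 ^ k) := by linarith
      calc (h' k - β) ^ 2 ≤ ((1 - ε) ^ (2 ^ k)) ^ 2 := pow_le_pow_left₀ h5 h6 2
        _ = (1 - ε) ^ (2 ^ (k + 1)) := by rw [← pow_mul, pow_succ]
  -- lower bounds on h' i - β in the three regimes
  have hLs : ∀ i, i + 2 ≤ t → s < h' i - β := by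
    intro i hi
    have h1 : T < h' (i+1) := hTlt (i+1) (by omega)
    have h2 : h' (i+1) = (h' i - β) ^ 2 := h'rec i
    have h3 : T < h' i := hTlt i (by omega)
    nlinarith only [hs2, hs0, h1, h2, h3, hβT]
  have hLq : ∀ i, i + 3 ≤ t → q < h' i - β := by
    intro i hi
    have h1 : s < h' (i+1) - β := hLs (i+1) (by omega)
    have h2 : h' (i+1) = (h' i - β) ^ 2 := h'rec i
    have h3 : T < h' i := hTlt i (by omega)
    nlinarith only [hq2, hq0, hs0, h1, h2, h3, hβT, hβ0.le]
  -- generic one-step bound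
  have stepL : ∀ (i : ℕ) (K L d : ℝ), 1 ≤ K → 0 < L → L ≤ h' i - β → 0 ≤ d →
      L * d = (2 + 3*ε/4) * β → h i ≤ h' i * K →
      h (i+1) ≤ h' (i+1) * (K * (1 + d)) ^ 2 := by
    intro i K L d hK hL hLle hd0 hLd hhi
    have h2 : (0:ℝ) ≤ h i + β := by linarith [hh0 i]
    have h3 : L * (K * d) ≤ (h' i - β) * (K * d) :=
      mul_le_mul_of_nonneg_right hLle (mul_nonneg (by linarith) hd0)
    have h4 : L * (K * d) = K * ((2 + 3*ε/4) * β) := by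
      rw [show L * (K * d) = K * (L * d) by ring, hLd]
    have h1 : h i + β ≤ (h' i - β) * (K * (1 + d)) := by
      nlinarith only [hhi, h3, h4, hβ0, hK, hε0.le,
        mul_nonneg (mul_nonneg hε0.le hβ0.le) (by linarith : (0:ℝ) ≤ K),
        mul_nonneg hβ0.le (by linarith : (0:ℝ) ≤ K - 1)]
    calc h (i+1) = (h i + β) ^ 2 := hrec i
      _ ≤ ((h' i - β) * (K * (1 + d))) ^ 2 := pow_le_pow_left₀ h2 h1 2
      _ = h' (i+1) * (K * (1 + d)) ^ 2 := by rw [h'rec]; ring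
  obtain ⟨a2, ha2def⟩ : ∃ x : ℝ, x = (2 + 3*ε/4) * β / q := ⟨_, rfl⟩
  obtain ⟨a1, ha1def⟩ : ∃ x : ℝ, x = (2 + 3*ε/4) * β / s := ⟨_, rfl⟩
  obtain ⟨b, hbdef⟩ : ∃ x : ℝ, x = (2 + 3*ε/4) * β / (T - β) := ⟨_, rfl⟩
  have ha20 : 0 ≤ a2 := by rw [ha2def]; positivity
  have ha10 : 0 ≤ a1 := by rw [ha1def]; positivity
  have hb0 : 0 ≤ b := by
    rw [hbdef]
    exact div_nonneg (by nlinarith) (by linarith)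
  have ha2q : q * a2 = (2 + 3*ε/4) * β := by
    rw [ha2def]; field_simp [hqpos.ne']
  have ha1s : s * a1 = (2 + 3*ε/4) * β := by
    rw [ha1def]; field_simp [hspos.ne']
  have hbm : (T - β) * b = (2 + 3*ε/4) * β := by
    rw [hbdef]; field_simp [hTβpos.ne']
  have ha2b : a2 ≤ 2.93 * β := by
    nlinarith only [ha2q, ha20, hqge, hβ0.le, hε0.le, hε,
      mul_nonneg ha20 (by linarith : (0:ℝ) ≤ q - 0.728)]
  have ha1b : a1 ≤ 4.02 * β := by
    nlinarith only [ha1s, ha10, hsge, hβ0.le, hε0.le, hε,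
      mul_nonneg ha10 (by linarith : (0:ℝ) ≤ s - 0.53)]
  have hbb : b ≤ 7.58 * β := by
    nlinarith only [hbm, hb0, hT9, hβn, hβ0.le, hε0.le, hε,
      mul_nonneg hb0 (by linarith : (0:ℝ) ≤ (T - β) - 0.28053)]
  -- main induction
  have hmain : ∀ i, i + 2 ≤ t → h i ≤ h' i * (1 + a2) ^ (2 ^ (i+1) - 2) := by
    intro i
    induction i with
    | zero =>
      intro _
      rw [h0, h'0, show (2:ℕ)^(0+1) - 2 = 0 from rfl, pow_zero, mul_one]
    | succ k ih =>
      intro hk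
      have hK := ih (by omega)
      have h1le : (1:ℝ) ≤ (1 + a2) ^ (2 ^ (k+1) - 2) := aux_one_le_pow (by linarith) _
      have hstep := stepL k ((1 + a2) ^ (2 ^ (k+1) - 2)) q a2 h1le hqpos
        (le_of_lt (hLq k (by omega))) ha20 ha2q hK
      have hp2 : 2 ≤ 2 ^ (k+1) := by
        calc 2 = 2 ^ 1 := (pow_one 2).symm
          _ ≤ 2 ^ (k+1) := Nat.pow_le_pow_right (by norm_num) (by omega)
      have hexp : ((1 + a2) ^ (2 ^ (k+1) - 2) * (1 + a2)) ^ 2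
          = (1 + a2) ^ (2 ^ (k+2) - 2) := by
        rw [← pow_succ, ← pow_mul]
        congr 1
        have h2' : (2:ℕ) ^ (k+2) = 2 ^ (k+1) * 2 := pow_succ 2 (k+1)
        omega
      calc h (k+1) ≤ h' (k+1) * ((1 + a2) ^ (2 ^ (k+1) - 2) * (1 + a2)) ^ 2 := hstep
        _ = h' (k+1) * (1 + a2) ^ (2 ^ (k+2) - 2) := by rw [hexp]
  rcases Nat.lt_or_ge t 2 with ht2 | ht2
  · -- case t = 1
    have ht1e : t = 1 := by omega
    subst ht1e
    have hbase : h 0 ≤ h' 0 * 1 := by rw [h0, h'0, mul_one]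
    have hstep := stepL 0 1 (T - β) b le_rfl hTβpos
      (by linarith [hTlt 0 (by norm_num)]) hb0 hbm hbase
    have hble1 : b ≤ 1 := by linarith only [hbb, hβn, hβ0.le]
    have hbound : ((1:ℝ) * (1 + b)) ^ 2 ≤ 1 + 3 * ε / 4 := by
      nlinarith only [hbb, hβε, hb0, hble1, hε0.le,
        mul_nonneg hb0 (by linarith : (0:ℝ) ≤ 1 - b)]
    refine ⟨fun i => (hpos i).2, ?_, ?_⟩
    · show h 0 ≤ h' 0 * (1 + 3 * ε / 4)
      have e : h 0 = h' 0 := by rw [h0, h'0]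
      rw [e]
      nlinarith only [(hpos 0).1, hε0.le, mul_nonneg (hpos 0).1 hε0.le]
    · calc h 1 ≤ h' 1 * ((1:ℝ) * (1 + b)) ^ 2 := hstep
        _ ≤ h' 1 * (1 + 3 * ε / 4) := mul_le_mul_of_nonneg_left hbound (hpos 1).1
  · -- case t ≥ 2
    obtain ⟨u, rfl⟩ : ∃ u, t = u + 2 := ⟨t - 2, by omega⟩
    obtain ⟨m, hmdef⟩ : ∃ m : ℕ, m = 2 ^ (u+1) - 2 := ⟨_, rfl⟩
    obtain ⟨n, hndef⟩ : ∃ n : ℕ, n = 2 ^ (u+1) := ⟨_, rfl⟩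
    have hmn : m ≤ n := by rw [hmdef, hndef]; exact Nat.sub_le _ _
    -- Bernoulli-based bound on n ε
    have h1ε : (0:ℝ) ≤ 1 - ε := by linarith
    have hTn : T < (1 - ε) ^ n := by
      rw [hndef]
      exact lt_of_lt_of_le (hTlt (u+1) (by omega)) (hup (u+1) (by omega))
    have hppos : (0:ℝ) < (1 + ε) ^ n := pow_pos (by linarith) n
    have hprod : (1 - ε) ^ n * (1 + ε) ^ n ≤ 1 := by
      rw [← mul_pow]
      exact pow_le_one₀ (by nlinarith only [hε, hε0.le, sq_nonneg ε])
        (by nlinarith only [hε, hε0.le, sq_nonneg ε])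
    have hTpow : T * (1 + ε) ^ n < 1 :=
      lt_of_lt_of_le (mul_lt_mul_of_pos_right hTn hppos) hprod
    have hbern := aux_bern ε hε0.le n
    have h0T : (0:ℝ) ≤ T := by linarith
    have hTq : T * (1 + (n:ℝ) * ε + (n:ℝ) * ((n:ℝ) - 1) * ε ^ 2 / 2) ≤ 1 := by
      have := mul_le_mul_of_nonneg_left hbern h0T
      linarith
    have hxn0 : (0:ℝ) ≤ (n:ℝ) * ε := mul_nonneg (Nat.cast_nonneg n) hε0.le
    have hA : (n:ℝ) * ε * (1 - ε/2) + ((n:ℝ) * ε) ^ 2 / 2 ≤ 23/9 := by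
      have hTpos : (0:ℝ) < T := by linarith
      have c1 : T * ((n:ℝ) * ε * (1 - ε/2) + ((n:ℝ) * ε) ^ 2 / 2) ≤ 1 - T := by
        calc T * ((n:ℝ) * ε * (1 - ε/2) + ((n:ℝ) * ε) ^ 2 / 2)
            = T * (1 + (n:ℝ) * ε + (n:ℝ) * ((n:ℝ) - 1) * ε ^ 2 / 2) - T := by ring
          _ ≤ 1 - T := by linarith
      have c2 : 1 - T ≤ T * (23/9) := by linarith
      exact le_of_mul_le_mul_left (by linarith) hTpos
    have hxb : (n:ℝ) * ε ≤ 1.53 := by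
      nlinarith only [hA, hxn0, mul_le_mul_of_nonneg_left hε hxn0,
        sq_nonneg ((n:ℝ) * ε - 1.53)]
    have hnβ : (n:ℝ) * β ≤ 1.53 * (ε * σ) / 16 := by
      have k1 : (n:ℝ) * β ≤ (n:ℝ) * (ε ^ 2 * σ / 16) :=
        mul_le_mul_of_nonneg_left hβ (Nat.cast_nonneg n)
      have k2 : ((n:ℝ) * ε) * (ε * σ) ≤ 1.53 * (ε * σ) :=
        mul_le_mul_of_nonneg_right hxb (mul_nonneg hε0.le hσ0)
      nlinarith only [k1, k2]
    have hu : 4 * (m:ℝ) * a2 ≤ 0.5 * ε := by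
      have k0 : (m:ℝ) ≤ (n:ℝ) := Nat.cast_le.mpr hmn
      have k1 : (m:ℝ) * a2 ≤ (n:ℝ) * a2 := mul_le_mul_of_nonneg_right k0 ha20
      have k2 : (n:ℝ) * a2 ≤ (n:ℝ) * (2.93 * β) :=
        mul_le_mul_of_nonneg_left ha2b (Nat.cast_nonneg n)
      have k3 : ε * σ ≤ 0.409 * ε := by
        nlinarith only [hσle, hε0.le, hσ0, mul_le_mul_of_nonneg_left hσle hε0.le]
      nlinarith only [k1, k2, hnβ, k3, hε0.le]
    have hv : 4 * a1 ≤ 0.08 * ε := by linarith only [ha1b, hβε, hε0.le]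
    have hw2 : 2 * b ≤ 0.07 * ε := by linarith only [hbb, hβε, hε0.le]
    have ha2le1 : a2 ≤ 1 := by linarith only [ha2b, hβn, hβ0.le]
    have ha1le1 : a1 ≤ 1 := by linarith only [ha1b, hβn, hβ0.le]
    have hble1 : b ≤ 1 := by linarith only [hbb, hβn, hβ0.le]
    have e1 := aux_pow a2 (m * 4) ha20 ha2le1
    rw [pow_mul] at e1
    push_cast at e1
    have e2 := aux_pow a1 4 ha10 ha1le1
    have e3 := aux_pow b 2 hb0 hble1
    push_cast at e2 e3
    obtain ⟨X, hXdef⟩ : ∃ x : ℝ, x = ((1 + a2) ^ m) ^ 4 := ⟨_, rfl⟩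
    rw [← hXdef] at e1
    have hX0 : (0:ℝ) ≤ X := by rw [hXdef]; positivity
    have hY0 : (0:ℝ) ≤ (1 + a1) ^ 4 := by positivity
    have hZ0 : (0:ℝ) ≤ (1 + b) ^ 2 := by positivity
    have hX1 : (1:ℝ) ≤ X := by
      rw [hXdef]; exact aux_one_le_pow (aux_one_le_pow (by linarith) m) 4
    have hY1 : (1:ℝ) ≤ (1 + a1) ^ 4 := aux_one_le_pow (by linarith) 4
    have hZ1 : (1:ℝ) ≤ (1 + b) ^ 2 := aux_one_le_pow (by linarith) 2
    have p1 : X * (1 - 0.5 * ε) ≤ 1 := by nlinarith only [e1, hu, hX0]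
    have p2 : (1 + a1) ^ 4 * (1 - 0.08 * ε) ≤ 1 := by nlinarith only [e2, hv, hY0]
    have p3 : (1 + b) ^ 2 * (1 - 0.07 * ε) ≤ 1 := by nlinarith only [e3, hw2, hZ0]
    have q1 : X * (1 + a1) ^ 4 * (1 - 0.58 * ε) ≤ 1 := by
      nlinarith only [p1, p2, hX0, hY0, hX1, hY1, hε, hε0.le,
        mul_le_mul p1 p2 (mul_nonneg hY0 (by linarith)) zero_le_one,
        mul_nonneg (mul_nonneg hX0 hY0) (mul_self_nonneg ε)]
    have q2 : X * (1 + a1) ^ 4 * (1 + b) ^ 2 * (1 - 0.65 * ε) ≤ 1 := by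
      nlinarith only [q1, p3, hX0, hY0, hZ0, hX1, hY1, hZ1, hε, hε0.le,
        mul_le_mul q1 p3 (mul_nonneg hZ0 (by linarith)) zero_le_one,
        mul_nonneg (mul_nonneg (mul_nonneg hX0 hY0) hZ0) (mul_self_nonneg ε)]
    have G2 : X * ((1 + a1) ^ 4 * (1 + b) ^ 2) ≤ 1 + 3 * ε / 4 := by
      nlinarith only [q2, hX1, hY1, hZ1, hε, hε0.le,
        mul_nonneg (mul_nonneg hX0 hY0) hZ0]
    have hK2ge1 : (1:ℝ) ≤ (1 + a2) ^ m := aux_one_le_pow (by linarith) m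
    have hKu : h u ≤ h' u * (1 + a2) ^ m := by
      rw [hmdef]; exact hmain u (by omega)
    have hstep1 := stepL u ((1 + a2) ^ m) s a1 hK2ge1 hspos
      (le_of_lt (hLs u (by omega))) ha10 ha1s hKu
    have hK1base : (1:ℝ) ≤ (1 + a2) ^ m * (1 + a1) := by
      nlinarith only [hK2ge1, ha10,
        mul_nonneg (by linarith only [hK2ge1] : (0:ℝ) ≤ (1 + a2) ^ m) ha10]
    have hK1ge1 : (1:ℝ) ≤ ((1 + a2) ^ m * (1 + a1)) ^ 2 := aux_one_le_pow hK1base 2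
    have hstep2 := stepL (u+1) (((1 + a2) ^ m * (1 + a1)) ^ 2) (T - β) b hK1ge1 hTβpos
      (by linarith [hTlt (u+1) (by omega : u + 1 < u + 2)]) hb0 hbm hstep1
    have hFeq : ((((1 + a2) ^ m * (1 + a1)) ^ 2) * (1 + b)) ^ 2
        = X * ((1 + a1) ^ 4 * (1 + b) ^ 2) := by
      rw [hXdef]; ring
    have G2' : ((((1 + a2) ^ m * (1 + a1)) ^ 2) * (1 + b)) ^ 2 ≤ 1 + 3 * ε / 4 := by
      rw [hFeq]; exact G2
    have G1 : ((1 + a2) ^ m * (1 + a1)) ^ 2 ≤ 1 + 3 * ε / 4 := by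
      nlinarith only [G2', hK1ge1, hb0,
        mul_nonneg (sq_nonneg ((1 + a2) ^ m * (1 + a1))) hb0]
    refine ⟨fun i => (hpos i).2, ?_, ?_⟩
    · show h (u+1) ≤ h' (u+1) * (1 + 3 * ε / 4)
      calc h (u+1) ≤ h' (u+1) * ((1 + a2) ^ m * (1 + a1)) ^ 2 := hstep1
        _ ≤ h' (u+1) * (1 + 3 * ε / 4) := mul_le_mul_of_nonneg_left G1 (hpos (u+1)).1
    · calc h (u+2) ≤ h' (u+2) * ((((1 + a2) ^ m * (1 + a1)) ^ 2) * (1 + b)) ^ 2 := hstep2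
        _ ≤ h' (u+2) * (1 + 3 * ε / 4) := mul_le_mul_of_nonneg_left G2' (hpos (u+2)).1
end
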